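/- Let X_n, X_m be square-integrable random variables with E[X_n] > 0, E[X_m] > 0, positive variances, and Cov(X_n, X_m) < 0, and let ν > 0. Then (Cov(X_n,X_m) + ν·E[X_n]·E[X_m]) / sqrt((Var(X_n) + ν·E[X_n]²)(Var(X_m) + ν·E[X_m]²)) > Cov(X_n,X_m)/sqrt(Var(X_n)·Var(X_m)); i.e., the correlation of the multiplicatively biased variables strictly exceeds the true correlation whenever the true covariance is negative. -/

import Mathlib

open MeasureTheory ProbabilityTheory

/-- Covariance of two real random variables: `Cov(X,Y) = E[XY] - E[X]E[Y]`. -/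
noncomputable def cov {Ω : Type*} [MeasurableSpace Ω] (μ : Measure Ω) (X Y : Ω → ℝ) : ℝ :=
  (∫ ω, X ω * Y ω ∂μ) - (∫ ω, X ω ∂μ) * (∫ ω, Y ω ∂μ)

/-- For square-integrable `Xₙ, Xₘ` with positive means, positive variances and negative
covariance, and any `ν > 0`, the biased correlation
`(Cov + ν EXₙ EXₘ)/√((Var Xₙ + ν EXₙ²)(Var Xₘ + ν EXₘ²))` strictly exceeds the true
correlation `Cov/√(Var Xₙ · Var Xₘ)`. -/
theorem biased_corr_gt_of_neg_cov {Ω : Type*} [MeasurableSpace Ω] (μ : Measure Ω)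
    [IsProbabilityMeasure μ] (Xn Xm : Ω → ℝ)
    (hXn : MemLp Xn 2 μ) (hXm : MemLp Xm 2 μ)
    (hEn : 0 < ∫ ω, Xn ω ∂μ) (hEm : 0 < ∫ ω, Xm ω ∂μ)
    (hVn : 0 < cov μ Xn Xn) (hVm : 0 < cov μ Xm Xm)
    (hneg : cov μ Xn Xm < 0) (ν : ℝ) (hν : 0 < ν) :
    cov μ Xn Xm / Real.sqrt (cov μ Xn Xn * cov μ Xm Xm)
      < (cov μ Xn Xm + ν * (∫ ω, Xn ω ∂μ) * (∫ ω, Xm ω ∂μ))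
          / Real.sqrt ((cov μ Xn Xn + ν * (∫ ω, Xn ω ∂μ) ^ 2)
              * (cov μ Xm Xm + ν * (∫ ω, Xm ω ∂μ) ^ 2)) := by
  set c := cov μ Xn Xm
  set v1 := cov μ Xn Xn
  set v2 := cov μ Xm Xm
  set a := ∫ ω, Xn ω ∂μ
  set b := ∫ ω, Xm ω ∂μ
  have hab : 0 < ν * a * b := by positivity
  have hs : 0 < Real.sqrt (v1 * v2) := Real.sqrt_pos.2 (by positivity)
  have ht : 0 < Real.sqrt ((v1 + ν * a ^ 2) * (v2 + ν * b ^ 2)) :=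
    Real.sqrt_pos.2 (by positivity)
  have hst : Real.sqrt (v1 * v2) < Real.sqrt ((v1 + ν * a ^ 2) * (v2 + ν * b ^ 2)) := by
    apply Real.sqrt_lt_sqrt (by positivity)
    nlinarith [mul_pos hVn (mul_pos hν (pow_pos hEm 2)), mul_pos hVm (mul_pos hν (pow_pos hEn 2)), mul_pos (mul_pos hν (pow_pos hEn 2)) (mul_pos hν (pow_pos hEm 2))]
  calc c / Real.sqrt (v1 * v2)
      < c / Real.sqrt ((v1 + ν * a ^ 2) * (v2 + ν * b ^ 2)) := by
        rw [div_lt_div_iff₀ hs ht]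
        nlinarith [mul_lt_mul_of_neg_left hst hneg]
    _ ≤ (c + ν * a * b) / Real.sqrt ((v1 + ν * a ^ 2) * (v2 + ν * b ^ 2)) := by
        gcongr
        linarith
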